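/- With the same setup (sorted scores g, softmax weights α, gap δ = g_K − g_{K+1} > 0, tail mass ε = ∑_{j>K} α_j < 1, value vectors v_j with ‖v_j‖ ≤ V), the renormalized pruned attention output c' = ∑_{j ≤ K} (α_j/(1−ε)) v_j satisfies ‖∑_j α_j v_j − c'‖ ≤ 2V · ((n−K)/K) · exp(−δ). -/

import Mathlib

theorem pruned_attention_error_exp_gap {E : Type*} [NormedAddCommGroup E] [NormedSpace ℝ E]
    (n K : ℕ) (hK : 1 ≤ K) (hKn : K < n)
    (g : Fin n → ℝ) (hsorted : ∀ i j : Fin n, i ≤ j → g j ≤ g i)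
    (α : Fin n → ℝ) (hα : ∀ j, α j = Real.exp (g j) / ∑ ℓ, Real.exp (g ℓ))
    (δ : ℝ)
    (hδ : δ = g ⟨K - 1, lt_trans (Nat.sub_lt (lt_of_lt_of_le Nat.zero_lt_one hK) Nat.zero_lt_one) hKn⟩
            - g ⟨K, hKn⟩)
    (hδpos : 0 < δ)
    (ε : ℝ) (hε : ε = ∑ j ∈ Finset.univ.filter (fun j : Fin n => K ≤ j.val), α j)
    (hε1 : ε < 1)
    (v : Fin n → E) (V : ℝ) (hV : ∀ j, ‖v j‖ ≤ V) :
    ‖(∑ j, α j • v j)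
        - ∑ j ∈ Finset.univ.filter (fun j : Fin n => j.val < K), (α j / (1 - ε)) • v j‖
      ≤ 2 * V * (((n - K : ℝ) / K) * Real.exp (-δ)) := by
  classical
  set Z := ∑ ℓ, Real.exp (g ℓ) with hZdef
  have hZpos : 0 < Z :=
    Finset.sum_pos (fun i _ => Real.exp_pos _) ⟨⟨0, by omega⟩, Finset.mem_univ _⟩
  have hαnn : ∀ j, 0 ≤ α j := fun j => by
    rw [hα]; positivity
  have hsum1 : ∑ j, α j = 1 := by
    simp only [hα, ← hZdef]
    rw [← Finset.sum_div]
    field_simp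
    exact hZdef.symm
  set S := Finset.univ.filter (fun j : Fin n => j.val < K) with hSdef
  set T := Finset.univ.filter (fun j : Fin n => K ≤ j.val) with hTdef
  have hST : ∑ j ∈ S, α j + ∑ j ∈ T, α j = 1 := by
    rw [← hsum1, ← Finset.sum_filter_add_sum_filter_not Finset.univ
      (fun j : Fin n => j.val < K)]
    congr 1
    apply Finset.sum_congr _ (fun _ _ => rfl)
    ext j; simp [hTdef, not_lt]
  have hSsum : ∑ j ∈ S, α j = 1 - ε := by
    rw [hε]; linarith [hST]
  have hεnn : 0 ≤ ε := by
    rw [hε]; exact Finset.sum_nonneg fun j _ => hαnn j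
  have h1ε : 0 < 1 - ε := by linarith
  have hVnn : 0 ≤ V := le_trans (norm_nonneg _) (hV ⟨0, by omega⟩)
  have hKpos : (0 : ℝ) < K := by exact_mod_cast hK
  set i₀ : Fin n := ⟨K - 1, lt_trans (Nat.sub_lt (lt_of_lt_of_le Nat.zero_lt_one hK)
    Nat.zero_lt_one) hKn⟩ with hi₀
  set i₁ : Fin n := ⟨K, hKn⟩ with hi₁
  have hcardS : S.card = K := by
    have : S = Finset.Iio i₁ := by
      ext j; simp [hSdef, Fin.lt_def, hi₁]
    rw [this, Fin.card_Iio]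
  have hcardT : T.card = n - K := by
    have : T = Finset.Ici i₁ := by
      ext j; simp [hTdef, Fin.le_def, hi₁]
    rw [this, Fin.card_Ici]
  -- tail mass bound
  have hεle : ε ≤ ((n - K : ℝ) / K) * Real.exp (-δ) := by
    have hnum : ∑ j ∈ T, Real.exp (g j) ≤ ((n : ℝ) - K) * Real.exp (g i₁) := by
      calc ∑ j ∈ T, Real.exp (g j) ≤ ∑ _j ∈ T, Real.exp (g i₁) := by
            apply Finset.sum_le_sum
            intro j hj
            apply Real.exp_le_exp.2
            apply hsorted i₁ j
            rw [Fin.le_def]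
            exact (by simpa [hTdef] using hj : K ≤ j.val)
        _ = ((n : ℝ) - K) * Real.exp (g i₁) := by
            rw [Finset.sum_const, nsmul_eq_mul, hcardT]
            rw [Nat.cast_sub hKn.le]
    have hden : (K : ℝ) * Real.exp (g i₀) ≤ Z := by
      calc (K : ℝ) * Real.exp (g i₀) = ∑ _j ∈ S, Real.exp (g i₀) := by
            rw [Finset.sum_const, nsmul_eq_mul, hcardS]
        _ ≤ ∑ j ∈ S, Real.exp (g j) := by
            apply Finset.sum_le_sum
            intro j hj
            apply Real.exp_le_exp.2
            apply hsorted j i₀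
            rw [Fin.le_def]
            have : j.val < K := by simpa [hSdef] using hj
            simp [hi₀]; omega
        _ ≤ Z := by
            rw [hZdef]
            exact Finset.sum_le_sum_of_subset_of_nonneg (Finset.filter_subset _ _)
              (fun i _ _ => (Real.exp_pos _).le)
    have hε' : ε = (∑ j ∈ T, Real.exp (g j)) / Z := by
      rw [hε, Finset.sum_div]
      exact Finset.sum_congr rfl fun j _ => hα j
    rw [hε', div_le_iff₀ hZpos]
    have hg1 : g i₁ = g i₀ - δ := by rw [hδ]; ring
    calc ∑ j ∈ T, Real.exp (g j) ≤ ((n : ℝ) - K) * Real.exp (g i₁) := hnum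
      _ = ((n : ℝ) - K) / K * Real.exp (-δ) * ((K : ℝ) * Real.exp (g i₀)) := by
          rw [hg1, show g i₀ - δ = -δ + g i₀ by ring, Real.exp_add]
          field_simp
      _ ≤ ((n : ℝ) - K) / K * Real.exp (-δ) * Z := by
          apply mul_le_mul_of_nonneg_left hden
          have hnK : (0 : ℝ) ≤ (n : ℝ) - K := by
            have := hKn.le
            push_cast
            exact sub_nonneg.2 (by exact_mod_cast this)
          positivity
  -- decompose the difference
  have hsplit : ∑ j, α j • v j = (∑ j ∈ S, α j • v j) + ∑ j ∈ T, α j • v j := by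
    rw [← Finset.sum_filter_add_sum_filter_not Finset.univ (fun j : Fin n => j.val < K)]
    congr 1
    apply Finset.sum_congr _ (fun _ _ => rfl)
    ext j; simp [hTdef, not_lt]
  have hdecomp : ∑ j ∈ S, (α j / (1 - ε)) • v j
      = (∑ j ∈ S, α j • v j) + (ε / (1 - ε)) • ∑ j ∈ S, α j • v j := by
    rw [Finset.smul_sum, ← Finset.sum_add_distrib]
    apply Finset.sum_congr rfl
    intro j _
    rw [smul_smul, ← add_smul]
    congr 1
    field_simp
    ring
  have key : (∑ j, α j • v j) - ∑ j ∈ S, (α j / (1 - ε)) • v j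
      = (∑ j ∈ T, α j • v j) - (ε / (1 - ε)) • ∑ j ∈ S, α j • v j := by
    rw [hsplit, hdecomp]; abel
  rw [key]
  have hnormS : ‖∑ j ∈ S, α j • v j‖ ≤ (1 - ε) * V := by
    calc ‖∑ j ∈ S, α j • v j‖ ≤ ∑ j ∈ S, ‖α j • v j‖ := norm_sum_le _ _
      _ ≤ ∑ j ∈ S, α j * V := by
          apply Finset.sum_le_sum
          intro j _
          rw [norm_smul, Real.norm_eq_abs, abs_of_nonneg (hαnn j)]
          exact mul_le_mul_of_nonneg_left (hV j) (hαnn j)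
      _ = (1 - ε) * V := by rw [← Finset.sum_mul, hSsum]
  have hnormT : ‖∑ j ∈ T, α j • v j‖ ≤ ε * V := by
    calc ‖∑ j ∈ T, α j • v j‖ ≤ ∑ j ∈ T, ‖α j • v j‖ := norm_sum_le _ _
      _ ≤ ∑ j ∈ T, α j * V := by
          apply Finset.sum_le_sum
          intro j _
          rw [norm_smul, Real.norm_eq_abs, abs_of_nonneg (hαnn j)]
          exact mul_le_mul_of_nonneg_left (hV j) (hαnn j)
      _ = ε * V := by rw [← Finset.sum_mul, hε]
  have hbound : ‖(∑ j ∈ T, α j • v j) - (ε / (1 - ε)) • ∑ j ∈ S, α j • v j‖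
      ≤ 2 * ε * V := by
    calc ‖(∑ j ∈ T, α j • v j) - (ε / (1 - ε)) • ∑ j ∈ S, α j • v j‖
        ≤ ‖∑ j ∈ T, α j • v j‖ + ‖(ε / (1 - ε)) • ∑ j ∈ S, α j • v j‖ := norm_sub_le _ _
      _ ≤ ε * V + (ε / (1 - ε)) * ((1 - ε) * V) := by
          apply add_le_add hnormT
          rw [norm_smul, Real.norm_eq_abs, abs_of_nonneg (by positivity : (0:ℝ) ≤ ε / (1 - ε))]
          exact mul_le_mul_of_nonneg_left hnormS (by positivity)
      _ = 2 * ε * V := by field_simp; ring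
  refine hbound.trans ?_
  have : 2 * ε * V ≤ 2 * (((n - K : ℝ) / K) * Real.exp (-δ)) * V := by
    apply mul_le_mul_of_nonneg_right _ hVnn
    linarith
  linarith
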